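/- arXiv:2304.06837 — 9 statements merged into one kernel-verified Lean document; each statement's English description precedes it below -/
import Mathlib

section
/- Let X be a finite set with closure operators φ₁, φ₂ whose families of closed sets are F₁ and F₂ respectively. If F₁ ⊊ F₂, then there exists a quasi-closed set Q of the system (X, φ₁) with Q ∈ F₂. -/
variable {X : Type*}

/-- A closure operator: extensive, monotone, idempotent. -/
def IsClosureOp (φ : Set X → Set X) : Prop :=
  (∀ A, A ⊆ φ A) ∧ (∀ A B : Set X, A ⊆ B → φ A ⊆ φ B) ∧ (∀ A, φ (φ A) = φ A)

/-- `S` obeys an implication `(A, B)` iff `A ⊆ S → B ⊆ S`. -/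
def Obeys (S : Set X) (p : Set X × Set X) : Prop := p.1 ⊆ S → p.2 ⊆ S

/-- Family of sets obeying every implication in `Sig`. -/
def ObeyFam (Sig : Set (Set X × Set X)) : Set (Set X) := {S | ∀ p ∈ Sig, Obeys S p}

/-- Family of `φ`-closed sets. -/
def ClosedFam (φ : Set X → Set X) : Set (Set X) := {S | φ S = S}

/-- `Q` is quasi-closed for `φ`. -/
def QuasiClosed (φ : Set X → Set X) (Q : Set X) : Prop :=
  Q ∉ ClosedFam φ ∧ ∀ S ∈ ClosedFam φ, Q ⊆ S ∨ Q ∩ S ∈ ClosedFam φ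

lemma inter_closed {φ : Set X → Set X} (hφ : IsClosureOp φ)
    {A B : Set X} (hA : A ∈ ClosedFam φ) (hB : B ∈ ClosedFam φ) :
    A ∩ B ∈ ClosedFam φ := by
  obtain ⟨ext, mono, _⟩ := hφ
  refine subset_antisymm ?_ (ext _)
  exact Set.subset_inter
    (by have := mono (A ∩ B) A Set.inter_subset_left; rwa [hA] at this)
    (by have := mono (A ∩ B) B Set.inter_subset_right; rwa [hB] at this)

theorem stmt4 [Finite X] (φ₁ φ₂ : Set X → Set X)
    (h₁ : IsClosureOp φ₁) (h₂ : IsClosureOp φ₂)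
    (h : ClosedFam φ₁ ⊂ ClosedFam φ₂) :
    ∃ Q, QuasiClosed φ₁ Q ∧ Q ∈ ClosedFam φ₂ := by
  set D : Set (Set X) := ClosedFam φ₂ \ ClosedFam φ₁ with hD
  have hDne : D.Nonempty := by
    rcases Set.exists_of_ssubset h with ⟨Q, hQ2, hQ1⟩
    exact ⟨Q, hQ2, hQ1⟩
  have hDfin : D.Finite := Set.toFinite D
  obtain ⟨Q, hQD, hmin⟩ : ∃ a ∈ D, ∀ a' ∈ D, id a' ≤ id a → id a = id a' := by
    obtain ⟨Q, hQD, hmin⟩ := Set.Finite.exists_minimalFor id D hDfin hDne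
    exact ⟨Q, hQD, fun a' ha' hle => le_antisymm (hmin ha' hle) hle⟩
  refine ⟨Q, ⟨hQD.2, ?_⟩, hQD.1⟩
  intro S hS
  have hS2 : S ∈ ClosedFam φ₂ := h.1 hS
  have hQS2 : Q ∩ S ∈ ClosedFam φ₂ := inter_closed h₂ hQD.1 hS2
  by_cases hsub : Q ⊆ S
  · exact Or.inl hsub
  by_cases hQS1 : Q ∩ S ∈ ClosedFam φ₁
  · exact Or.inr hQS1
  · exfalso
    have hmem : Q ∩ S ∈ D := ⟨hQS2, hQS1⟩
    have hle : (Q ∩ S : Set X) ⊆ Q := Set.inter_subset_left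
    have := hmin (Q ∩ S) hmem hle
    simp only [id] at this
    exact hsub (this ▸ Set.inter_subset_right)
end

section
/- Let (X, φ) be a finite closure system with closed sets F, and let Σ be a set of implications on X with induced closed-set family F_Σ. If (1) for every implication (A → B) ∈ Σ we have B ⊆ φ(A), and (2) for every quasi-closed set Q of (X, φ) there exists (A → B) ∈ Σ with A ⊆ Q and B ⊄ Q, then F_Σ = F. -/
variable {X : Type*}

theorem stmt6 [Finite X] (φ : Set X → Set X) (hφ : IsClosureOp φ)
    (Sig : Set (Set X × Set X))
    (h1 : ∀ p ∈ Sig, p.2 ⊆ φ p.1)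
    (h2 : ∀ Q, QuasiClosed φ Q → ∃ p ∈ Sig, p.1 ⊆ Q ∧ ¬ p.2 ⊆ Q) :
    ObeyFam Sig = ClosedFam φ := by
  obtain ⟨hext, hmono, hidem⟩ := hφ
  ext S
  constructor
  · intro hS
    by_contra hSc
    -- minimal counterexample
    have hne : ({T : Set X | T ∈ ObeyFam Sig ∧ T ∉ ClosedFam φ}).Nonempty := ⟨S, hS, hSc⟩
    obtain ⟨Q, ⟨hQob, hQnc⟩, hmin⟩ :=
      (Finite.to_wellFoundedLT (α := Set X)).wf.has_min _ hne
    have hquasi : QuasiClosed φ Q := by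
      refine ⟨hQnc, fun W hW => ?_⟩
      by_cases hsub : Q ⊆ W
      · exact Or.inl hsub
      · right
        have hob : Q ∩ W ∈ ObeyFam Sig := by
          intro p hp hsub'
          have h₁ : p.2 ⊆ Q := hQob p hp (hsub'.trans Set.inter_subset_left)
          have h₂ : p.2 ⊆ W := by
            refine (h1 p hp).trans ?_
            calc φ p.1 ⊆ φ W := hmono _ _ (hsub'.trans Set.inter_subset_right)
              _ = W := hW
          exact Set.subset_inter h₁ h₂
        by_contra hnc
        exact hmin (Q ∩ W) ⟨hob, hnc⟩
          (lt_of_le_of_ne Set.inter_subset_left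
            (fun h => hsub (h ▸ Set.inter_subset_right)))
    obtain ⟨p, hp, hA, hB⟩ := h2 Q hquasi
    exact hB (hQob p hp hA)
  · intro hS p hp hsub
    calc p.2 ⊆ φ p.1 := h1 p hp
      _ ⊆ φ S := hmono _ _ hsub
      _ = S := hS
end

section
/- Let (X, φ) be a finite closure system with closed sets F, and let Σ be a set of implications on X with induced closed-set family F_Σ. If F_Σ = F, then (1) every implication (A → B) ∈ Σ satisfies B ⊆ φ(A), and (2) for every quasi-closed set Q of (X, φ) there is an implication (A → B) ∈ Σ with A ⊆ Q and B ⊄ Q. -/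
variable {X : Type*}

theorem stmt7 [Finite X] (φ : Set X → Set X) (hφ : IsClosureOp φ)
    (Sig : Set (Set X × Set X))
    (h : ObeyFam Sig = ClosedFam φ) :
    (∀ p ∈ Sig, p.2 ⊆ φ p.1) ∧
    (∀ Q, QuasiClosed φ Q → ∃ p ∈ Sig, p.1 ⊆ Q ∧ ¬ p.2 ⊆ Q) := by
  obtain ⟨hext, hmono, hidem⟩ := hφ
  constructor
  · intro p hp
    have hcl : φ p.1 ∈ ObeyFam Sig := by rw [h]; exact hidem p.1
    exact hcl p hp (hext p.1)
  · intro Q hQ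
    by_contra hc
    push_neg at hc
    apply hQ.1
    rw [← h]
    intro p hp h1
    exact hc p hp h1
end

section
/- Let Q be a quasi-closed set of a closure system (X, φ) and let A ⊆ Q with φ(A) ⊄ Q. Then φ(A) = φ(Q). -/
variable {X : Type*}

theorem stmt10 (φ : Set X → Set X) (hφ : IsClosureOp φ)
    (Q : Set X) (hQ : QuasiClosed φ Q)
    (A : Set X) (hA : A ⊆ Q) (h : ¬ φ A ⊆ Q) :
    φ A = φ Q := by
  obtain ⟨hext, hmono, hidem⟩ := hφ
  have hclosed : φ A ∈ ClosedFam φ := hidem A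
  rcases hQ.2 (φ A) hclosed with hsub | hint
  · exact subset_antisymm (hmono A Q hA)
      (by rw [← hidem A]; exact hmono Q (φ A) hsub)
  · exfalso
    apply h
    have hAint : A ⊆ Q ∩ φ A := fun x hx => ⟨hA hx, hext A hx⟩
    have := hmono A (Q ∩ φ A) hAint
    rw [hint] at this
    exact this.trans Set.inter_subset_left
end

section
/- (Interchangeability of implication groups.) Let (X, φ) be a finite closure system, let E₁, …, Eₙ be its essential sets, and let Σ₁, …, Σₙ each be implication bases for (X, φ). For each i, let Σᵢ' = {(A → B) ∈ Σᵢ : φ(A) = Eᵢ}. Then Σ = Σ₁' ∪ ⋯ ∪ Σₙ' is again an implication basis for (X, φ). -/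
variable {X : Type*}

theorem stmt11 [Finite X] (φ : Set X → Set X) (hφ : IsClosureOp φ)
    (n : ℕ) (E : Fin n → Set X)
    (hE : ∀ i, ∃ Q, QuasiClosed φ Q ∧ φ Q = E i)
    (hE' : ∀ Q, QuasiClosed φ Q → ∃ i, φ Q = E i)
    (Sig : Fin n → Set (Set X × Set X))
    (hSig : ∀ i, ObeyFam (Sig i) = ClosedFam φ) :
    ObeyFam (⋃ i, {p ∈ Sig i | φ p.1 = E i}) = ClosedFam φ := by
  obtain ⟨hext, hmono, hidem⟩ := hφ
  set Sg : Set (Set X × Set X) := ⋃ i, {p ∈ Sig i | φ p.1 = E i} with hSg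
  -- Easy direction: every closed set obeys Sg
  have hCO : ClosedFam φ ⊆ ObeyFam Sg := by
    intro C hC p hp
    obtain ⟨_, ⟨i, rfl⟩, hpm, _⟩ := hp
    have hC' : C ∈ ObeyFam (Sig i) := (hSig i).symm ▸ hC
    exact hC' p hpm
  -- Hard direction, by strong induction on cardinality
  have key : ∀ (k : ℕ) (S : Set X), S.ncard = k → S ∈ ObeyFam Sg → φ S = S := by
    intro k
    induction k using Nat.strong_induction_on with
    | _ k IH =>
      intro S hk hS
      by_contra hne
      -- S is quasi-closed
      have hq : QuasiClosed φ S := by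
        refine ⟨hne, fun C hC => ?_⟩
        by_cases h : S ⊆ C
        · exact Or.inl h
        · right
          have hssub : S ∩ C ⊂ S :=
            ⟨Set.inter_subset_left, fun hs => h fun x hx => (hs hx).2⟩
          have hlt : (S ∩ C).ncard < k := hk ▸ Set.ncard_lt_ncard hssub (Set.toFinite S)
          have hmem : S ∩ C ∈ ObeyFam Sg := by
            intro p hp hA
            exact Set.subset_inter ((hS p hp) (hA.trans Set.inter_subset_left))
              ((hCO hC p hp) (hA.trans Set.inter_subset_right))
          exact IH _ hlt _ rfl hmem
      obtain ⟨i, hφS⟩ := hE' S hq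
      -- S violates some implication in Sig i
      have hSnot : S ∉ ObeyFam (Sig i) := by
        rw [hSig i]; exact hne
      have : ∃ p ∈ Sig i, p.1 ⊆ S ∧ ¬ p.2 ⊆ S := by
        by_contra hcon
        push_neg at hcon
        exact hSnot fun p hp hA => hcon p hp hA
      obtain ⟨p, hp, hA, hB⟩ := this
      have hφA : φ p.1 ⊆ E i := hφS ▸ hmono p.1 S hA
      by_cases hcase : S ⊆ φ p.1
      · -- then φ p.1 = E i and p ∈ Sg, contradiction
        have h1 : E i ⊆ φ p.1 := by
          rw [← hφS]
          calc φ S ⊆ φ (φ p.1) := hmono _ _ hcase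
            _ = φ p.1 := hidem _
        have hpE : φ p.1 = E i := Set.Subset.antisymm hφA h1
        have hpU : p ∈ Sg := Set.mem_iUnion.2 ⟨i, hp, hpE⟩
        exact hB (hS p hpU hA)
      · have hclosed : φ p.1 ∈ ClosedFam φ := hidem p.1
        have hinter : S ∩ φ p.1 ∈ ClosedFam φ :=
          (hq.2 _ hclosed).resolve_left hcase
        have hobey : S ∩ φ p.1 ∈ ObeyFam (Sig i) := (hSig i).symm ▸ hinter
        have hA' : p.1 ⊆ S ∩ φ p.1 := Set.subset_inter hA (hext p.1)
        exact hB ((hobey p hp hA').trans Set.inter_subset_left)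
  exact Set.Subset.antisymm (fun S hS => key S.ncard S rfl hS) hCO
end

section
/- Let (X, φ) be a finite closure system with essential sets E₁, …, Eₙ, and suppose Σ₁ and Σ₂ are bases of (X, φ). Fix an index i, and let Σ = {(A → B) ∈ Σ₂ : φ(A) = Eᵢ} ∪ {(A → B) ∈ Σ₁ : φ(A) ≠ Eᵢ}. Then Σ is a basis of (X, φ). -/
variable {X : Type*}

theorem stmt12 [Finite X] (φ : Set X → Set X) (hφ : IsClosureOp φ)
    (E : Set X) (hE : ∃ Q, QuasiClosed φ Q ∧ φ Q = E)
    (T₁ T₂ : Set (Set X × Set X))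
    (h₁ : ObeyFam T₁ = ClosedFam φ) (h₂ : ObeyFam T₂ = ClosedFam φ) :
    ObeyFam ({p ∈ T₂ | φ p.1 = E} ∪ {p ∈ T₁ | φ p.1 ≠ E}) = ClosedFam φ := by
  obtain ⟨hext, hmono, hidem⟩ := hφ
  set Sg : Set (Set X × Set X) :=
    {p ∈ T₂ | φ p.1 = E} ∪ {p ∈ T₁ | φ p.1 ≠ E} with hSg
  -- closed sets obey T₁ and T₂
  have hcl₁ : ∀ C, φ C = C → ∀ p ∈ T₁, Obeys C p := by
    intro C hC; have : C ∈ ObeyFam T₁ := by rw [h₁]; exact hC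
    exact this
  have hcl₂ : ∀ C, φ C = C → ∀ p ∈ T₂, Obeys C p := by
    intro C hC; have : C ∈ ObeyFam T₂ := by rw [h₂]; exact hC
    exact this
  -- conclusion of an implication is inside the closure of its premise
  have hB₁ : ∀ p ∈ T₁, p.2 ⊆ φ p.1 := fun p hp => hcl₁ (φ p.1) (hidem _) p hp (hext p.1)
  have hB₂ : ∀ p ∈ T₂, p.2 ⊆ φ p.1 := fun p hp => hcl₂ (φ p.1) (hidem _) p hp (hext p.1)
  have hBS : ∀ p ∈ Sg, p.2 ⊆ φ p.1 := by
    rintro p (⟨hp, -⟩ | ⟨hp, -⟩)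
    · exact hB₂ p hp
    · exact hB₁ p hp
  -- E is closed
  obtain ⟨Q, -, hQE⟩ := hE
  have hEc : φ E = E := by rw [← hQE, hidem]
  apply Set.Subset.antisymm
  · -- hard direction, by strong induction on cardinality
    have key : ∀ n, ∀ S : Set X, S.ncard = n → S ∈ ObeyFam Sg → S ∈ ClosedFam φ := by
      intro n
      induction n using Nat.strong_induction_on with
      | _ n ih =>
        intro S hn hS
        by_contra hSc
        -- intersecting with a closed set preserves obeying Sg
        have hint : ∀ C, φ C = C → (S ∩ C) ∈ ObeyFam Sg := by
          intro C hC p hp hpA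
          have h1 : p.2 ⊆ S := hS p hp (hpA.trans Set.inter_subset_left)
          have h2 : p.2 ⊆ C := by
            refine (hBS p hp).trans ?_
            calc φ p.1 ⊆ φ C := hmono _ _ (hpA.trans Set.inter_subset_right)
              _ = C := hC
          exact Set.subset_inter h1 h2
        -- minimality: a proper closed-intersection is closed
        have hmin : ∀ C, φ C = C → S ∩ C ≠ S → φ (S ∩ C) = S ∩ C := by
          intro C hC hne
          have hss : S ∩ C ⊂ S := (Set.inter_subset_left).ssubset_of_ne hne
          have hlt : (S ∩ C).ncard < n := by
            rw [← hn]; exact Set.ncard_lt_ncard hss (Set.toFinite S)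
          exact ih _ hlt _ rfl (hint C hC)
        -- S fails some implication of T₁, whose premise must have closure E
        obtain ⟨p, hpT₁, hpA, hpB⟩ : ∃ p ∈ T₁, p.1 ⊆ S ∧ ¬ p.2 ⊆ S := by
          by_contra h
          push_neg at h
          apply hSc
          rw [← h₁]
          intro p hp hpA
          exact h p hp hpA
        have hpE : φ p.1 = E := by
          by_contra h
          exact hpB (hS p (Or.inr ⟨hpT₁, h⟩) hpA)
        -- S ⊆ E
        have hSE : S ⊆ E := by
          by_contra h
          have hne : S ∩ E ≠ S := by
            intro heq
            exact h (by rw [← heq]; exact Set.inter_subset_right)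
          have hSEc := hmin E hEc hne
          -- then S obeys all of T₁, so it is closed: contradiction
          apply hSc
          rw [← h₁]
          intro q hq hqA
          by_cases hqE : φ q.1 = E
          · have hq1 : q.1 ⊆ S ∩ E :=
              Set.subset_inter hqA (hqE ▸ hext q.1)
            exact (hcl₁ _ hSEc q hq hq1).trans Set.inter_subset_left
          · exact hS q (Or.inr ⟨hq, hqE⟩) hqA
        have hφS : φ S = E := by
          apply Set.Subset.antisymm
          · calc φ S ⊆ φ E := hmono _ _ hSE
              _ = E := hEc
          · rw [← hpE]; exact hmono _ _ hpA
        -- S fails some implication of T₂, whose premise closure is ≠ E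
        obtain ⟨q, hqT₂, hqA, hqB⟩ : ∃ q ∈ T₂, q.1 ⊆ S ∧ ¬ q.2 ⊆ S := by
          by_contra h
          push_neg at h
          apply hSc
          rw [← h₂]
          intro q hq hqA
          exact h q hq hqA
        have hqE : φ q.1 ≠ E := by
          intro h
          exact hqB (hS q (Or.inl ⟨hqT₂, h⟩) hqA)
        by_cases hc : S ∩ φ q.1 = S
        · -- then S ⊆ φ q.1 and φ q.1 = E, contradiction
          apply hqE
          have hSq : S ⊆ φ q.1 := by rw [← hc]; exact Set.inter_subset_right
          apply Set.Subset.antisymm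
          · rw [← hφS]; exact hmono _ _ hqA
          · calc E = φ S := hφS.symm
              _ ⊆ φ (φ q.1) := hmono _ _ hSq
              _ = φ q.1 := hidem _
        · have hclo := hmin (φ q.1) (hidem _) hc
          have hq1 : q.1 ⊆ S ∩ φ q.1 := Set.subset_inter hqA (hext _)
          exact hqB ((hcl₂ _ hclo q hqT₂ hq1).trans Set.inter_subset_left)
    intro S hS
    exact key S.ncard S rfl hS
  · -- easy direction: closed sets obey everything
    rintro S hS p (⟨hp, -⟩ | ⟨hp, -⟩)
    · exact hcl₂ S hS p hp
    · exact hcl₁ S hS p hp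
end

section
/- (Guigues–Duquenne necessity, used in the paper.) Let (X, φ) be a finite closure system and Σ a basis for (X, φ). Then for every critical set C of (X, φ), there is an implication (A → B) ∈ Σ with σ(A) = C, where σ is the saturation operator; in particular φ(A) = φ(C) is an essential set. -/
variable {X : Type*}

theorem stmt13 [Finite X] (φ σ : Set X → Set X)
    (hφ : IsClosureOp φ) (hσ : IsClosureOp σ)
    (hσF : ClosedFam σ = ClosedFam φ ∪ {Q | QuasiClosed φ Q})
    (Sig : Set (Set X × Set X)) (hbasis : ObeyFam Sig = ClosedFam φ)
    (C : Set X) (hC : QuasiClosed φ C)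
    (hcrit : ∀ S, QuasiClosed φ S → S ⊂ C → φ S ≠ φ C) :
    ∃ p ∈ Sig, σ p.1 = C ∧ φ p.1 = φ C := by
  obtain ⟨hφe, hφm, hφi⟩ := hφ
  obtain ⟨hσe, hσm, hσi⟩ := hσ
  -- C is σ-closed
  have hCσ : σ C = C := by
    have : C ∈ ClosedFam σ := by rw [hσF]; exact Or.inr hC
    exact this
  -- C is not φ-closed, so doesn't obey some implication
  have hCno : C ∉ ObeyFam Sig := by rw [hbasis]; exact hC.1
  simp only [ObeyFam, Set.mem_setOf_eq, not_forall] at hCno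
  obtain ⟨p, hpSig, hpno⟩ := hCno
  have hAC : p.1 ⊆ C := by
    by_contra h; exact hpno (fun h' => absurd h' h)
  have hBC : ¬ p.2 ⊆ C := fun h => hpno (fun _ => h)
  refine ⟨p, hpSig, ?_, ?_⟩
  . -- σ p.1 = C
    have hsub : σ p.1 ⊆ C := by rw [← hCσ]; exact hσm _ _ hAC
    have hmem : σ p.1 ∈ ClosedFam φ ∪ {Q | QuasiClosed φ Q} := by
      rw [← hσF]; exact hσi p.1
    rcases hmem with hcl | hq
    · -- σ p.1 is φ-closed: obeys p, contradiction
      exfalso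
      have : σ p.1 ∈ ObeyFam Sig := by rw [hbasis]; exact hcl
      have hB : p.2 ⊆ σ p.1 := this p hpSig (hσe p.1)
      exact hBC (hB.trans hsub)
    · -- σ p.1 is quasi-closed
      by_contra hne
      have hssub : σ p.1 ⊂ C := ⟨hsub, fun h => hne (le_antisymm hsub h)⟩
      apply hcrit _ hq hssub
      -- φ (σ p.1) = φ C
      have h1 : φ p.1 = φ C := by
        -- proven below by same argument; inline it
        rcases hC.2 (φ p.1) (hφi p.1) with h | h
        · exact le_antisymm (hφm _ _ hAC) (by rw [← hφi p.1]; exact hφm _ _ h)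
        · exfalso
          have : C ∩ φ p.1 ∈ ObeyFam Sig := by rw [hbasis]; exact h
          have hB : p.2 ⊆ C ∩ φ p.1 :=
            this p hpSig (Set.subset_inter hAC (hφe p.1))
          exact hBC (hB.trans Set.inter_subset_left)
      have h2 : φ p.1 ⊆ φ (σ p.1) := hφm _ _ (hσe p.1)
      have h3 : φ (σ p.1) ⊆ φ C := hφm _ _ hsub
      exact le_antisymm h3 (h1 ▸ h2)
  . -- φ p.1 = φ C
    rcases hC.2 (φ p.1) (hφi p.1) with h | h
    · exact le_antisymm (hφm _ _ hAC) (by rw [← hφi p.1]; exact hφm _ _ h)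
    · exfalso
      have : C ∩ φ p.1 ∈ ObeyFam Sig := by rw [hbasis]; exact h
      have hB : p.2 ⊆ C ∩ φ p.1 :=
        this p hpSig (Set.subset_inter hAC (hφe p.1))
      exact hBC (hB.trans Set.inter_subset_left)
end

section
/- (Resolution of Adaricheva–Nation Conjecture 67.) Let (X, φ) be a finite closure system, E an essential set of (X, φ), and Σ an optimal basis. If A₁ → B₁, …, Aₙ → Bₙ are all the implications of Σ with φ(Aᵢ) = E, then the sum |B₁| + ⋯ + |Bₙ| is the same for every optimal basis Σ (assuming the pairing can be chosen so that corresponding left sides have equal saturations, as guaranteed by Wild's theorem). -/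
variable {X : Type*}

open scoped Classical

section Aux

variable {φ : Set X → Set X} {E : Set X}

/-- `S` is stable (saturated-closed) relative to `E`. -/
private def Stab (φ : Set X → Set X) (E S : Set X) : Prop :=
  ∀ C : Set X, C ⊆ S → φ C ⊆ E → φ C ≠ E → φ C ⊆ S

/-- The saturation of `A` relative to `E`. -/
private def sat (φ : Set X → Set X) (E A : Set X) : Set X :=
  ⋂₀ {S : Set X | A ⊆ S ∧ S ⊆ E ∧ Stab φ E S}

/-- Quasi-closed sets with closure `E` (described intrinsically). -/
private def Qset (φ : Set X → Set X) (E : Set X) : Set (Set X) :=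
  {S | S ⊆ E ∧ Stab φ E S ∧ S ≠ E ∧ φ S = E}

/-- Minimal members of `Qset`. -/
private def MinQ (φ : Set X → Set X) (E : Set X) : Set (Set X) :=
  {P | P ∈ Qset φ E ∧ ∀ Q ∈ Qset φ E, Q ⊆ P → Q = P}

/-- A cover: a family of implications with premise-closure `E` that cuts off every
member of `Qset`. -/
private def Cover (φ : Set X → Set X) (E : Set X) (Γ : Finset (Set X × Set X)) : Prop :=
  (∀ p ∈ Γ, φ p.1 = E ∧ p.2 ⊆ E) ∧
  ∀ S ∈ Qset φ E, ∃ p ∈ Γ, p.1 ⊆ S ∧ ¬ p.2 ⊆ S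

private def isMinCover (φ : Set X → Set X) (E : Set X) (Γ : Finset (Set X × Set X)) : Prop :=
  Cover φ E Γ ∧ ∀ Δ : Finset (Set X × Set X), Cover φ E Δ →
    ∑ p ∈ Γ, (p.1.ncard + p.2.ncard) ≤ ∑ p ∈ Δ, (p.1.ncard + p.2.ncard)

/-- minimal possible premise size for saturation inside `P`. -/
private noncomputable def mval (φ : Set X → Set X) (E P : Set X) : ℕ :=
  sInf {n | ∃ A : Set X, φ A = E ∧ sat φ E A ⊆ P ∧ A.ncard = n}

private lemma subset_sat {A : Set X} : A ⊆ sat φ E A :=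
  Set.subset_sInter fun _ hS => hS.1

private lemma sat_subset {A S : Set X} (h1 : A ⊆ S) (h2 : S ⊆ E) (h3 : Stab φ E S) :
    sat φ E A ⊆ S :=
  Set.sInter_subset_of_mem ⟨h1, h2, h3⟩

private lemma stab_E : Stab φ E E := fun _ _ h _ => h

private lemma sat_subset_E {A : Set X} (hA : A ⊆ E) : sat φ E A ⊆ E :=
  sat_subset hA subset_rfl stab_E

private lemma stab_sat {A : Set X} : Stab φ E (sat φ E A) := by
  intro C hC h1 h2
  exact Set.subset_sInter fun S hS =>
    hS.2.2 C (hC.trans (Set.sInter_subset_of_mem hS)) h1 h2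

private lemma sat_mono {A B : Set X} (h : A ⊆ B) : sat φ E A ⊆ sat φ E B :=
  Set.subset_sInter fun S hS => Set.sInter_subset_of_mem ⟨h.trans hS.1, hS.2⟩

private lemma phi_sat (hφ : IsClosureOp φ) {A : Set X} (hA : φ A = E) :
    φ (sat φ E A) = E := by
  obtain ⟨hext, hmono, hidem⟩ := hφ
  have hAE : A ⊆ E := hA ▸ hext A
  apply Set.Subset.antisymm
  · have h1 : φ (sat φ E A) ⊆ φ E := hmono _ _ (sat_subset_E hAE)
    have h2 : φ E = E := by rw [← hA]; exact hidem A
    exact h1.trans h2.subset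
  · have := hmono _ _ (subset_sat (φ := φ) (E := E) (A := A))
    rw [hA] at this
    exact this

private lemma snd_subset (hφ : IsClosureOp φ) {T : Finset (Set X × Set X)}
    (h : ObeyFam (↑T : Set (Set X × Set X)) = ClosedFam φ) {p : Set X × Set X}
    (hp : p ∈ T) : p.2 ⊆ φ p.1 := by
  have hcl : φ p.1 ∈ ClosedFam φ := hφ.2.2 p.1
  rw [← h] at hcl
  exact hcl p (by exact_mod_cast hp) (hφ.1 p.1)

/-- Lemma A : closures strictly below `E` are forced by the non-`E` part of a basis. -/
private lemma lemA (hφ : IsClosureOp φ) {T : Finset (Set X × Set X)}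
    (h₁ : ObeyFam (↑T : Set (Set X × Set X)) = ClosedFam φ)
    {S C : Set X} (hS : ∀ p ∈ T, φ p.1 ≠ E → Obeys S p)
    (hCS : C ⊆ S) (hsub : φ C ⊆ E) (hne : φ C ≠ E) : φ C ⊆ S := by
  obtain ⟨hext, hmono, hidem⟩ := hφ
  set A := {S' : Set X | C ⊆ S' ∧ ∀ p ∈ T, φ p.1 ≠ E → Obeys S' p} with hA
  set K := ⋂₀ A with hK
  have hCK : C ⊆ K := Set.subset_sInter fun S' hS' => hS'.1
  have hφCA : φ C ∈ A := by
    refine ⟨hext C, fun p hp _ => ?_⟩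
    have hcl : φ C ∈ ObeyFam (↑T : Set (Set X × Set X)) := by
      rw [h₁]; exact hidem C
    exact hcl p (by exact_mod_cast hp)
  have hKφC : K ⊆ φ C := Set.sInter_subset_of_mem hφCA
  have hKobey : K ∈ ObeyFam (↑T : Set (Set X × Set X)) := by
    intro p hp
    have hpT : p ∈ T := by exact_mod_cast hp
    rcases eq_or_ne (φ p.1) E with hpe | hpe
    · intro hp1
      exfalso
      have h1 : φ p.1 ⊆ φ (φ C) := hmono _ _ (hp1.trans hKφC)
      rw [hidem, hpe] at h1
      exact hne (Set.Subset.antisymm hsub h1)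
    · intro hp1
      exact Set.subset_sInter fun S' hS' =>
        hS'.2 p hpT hpe (hp1.trans (Set.sInter_subset_of_mem hS'))
  have hKclosed : φ K = K := by rw [h₁] at hKobey; exact hKobey
  have hKS : K ⊆ S := Set.sInter_subset_of_mem ⟨hCS, hS⟩
  calc φ C ⊆ φ K := hmono _ _ hCK
  _ = K := hKclosed
  _ ⊆ S := hKS

/-- Exchange: replacing the E-part of a basis by any cover yields a basis. -/
private lemma basis_of_cover (hφ : IsClosureOp φ) {T : Finset (Set X × Set X)}
    (h₁ : ObeyFam (↑T : Set (Set X × Set X)) = ClosedFam φ)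
    {Γ : Finset (Set X × Set X)} (hΓ : Cover φ E Γ) :
    ObeyFam (↑(T.filter (fun p => ¬ φ p.1 = E) ∪ Γ) : Set (Set X × Set X)) = ClosedFam φ := by
  obtain ⟨hext, hmono, hidem⟩ := id hφ
  ext S
  constructor
  · intro hS
    by_contra hSc
    have hSno : S ∉ ObeyFam (↑T : Set (Set X × Set X)) := by rw [h₁]; exact hSc
    simp only [ObeyFam, Set.mem_setOf_eq, not_forall] at hSno
    obtain ⟨p, hpT, hpfail⟩ := hSno
    have hpT' : p ∈ T := by exact_mod_cast hpT
    rw [Obeys, Classical.not_imp] at hpfail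
    obtain ⟨hp1, hp2⟩ := hpfail
    have hobeyne : ∀ q ∈ T, φ q.1 ≠ E → Obeys S q := by
      intro q hq hqne
      apply hS
      have : q ∈ T.filter (fun p => ¬ φ p.1 = E) ∪ Γ :=
        Finset.mem_union_left _ (Finset.mem_filter.mpr ⟨hq, hqne⟩)
      exact_mod_cast this
    have hpe : φ p.1 = E := by
      by_contra hpe
      exact hp2 (hobeyne p hpT' hpe hp1)
    have hp2E : p.2 ⊆ E := by
      have := snd_subset hφ h₁ hpT'
      rwa [hpe] at this
    by_cases hES : E ⊆ S
    · exact hp2 (hp2E.trans hES)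
    · have hWQ : S ∩ E ∈ Qset φ E := by
        refine ⟨Set.inter_subset_right, ?_, ?_, ?_⟩
        · intro C hC hc1 hc2
          have : φ C ⊆ S := lemA hφ h₁ hobeyne (hC.trans Set.inter_subset_left) hc1 hc2
          exact Set.subset_inter this hc1
        · intro hWE
          exact hES (by rw [← hWE]; exact Set.inter_subset_left)
        · have hp1E : p.1 ⊆ E := hpe ▸ hext p.1
          have hp1W : p.1 ⊆ S ∩ E := Set.subset_inter hp1 hp1E
          apply Set.Subset.antisymm
          · have h1 : φ (S ∩ E) ⊆ φ E := hmono _ _ Set.inter_subset_right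
            have h2 : φ E = E := by rw [← hpe]; exact hidem p.1
            exact h1.trans h2.subset
          · have h3 := hmono _ _ hp1W
            rw [hpe] at h3
            exact h3
      obtain ⟨q, hqΓ, hq1, hq2⟩ := hΓ.2 _ hWQ
      have hqS : Obeys S q := by
        apply hS
        have : q ∈ T.filter (fun p => ¬ φ p.1 = E) ∪ Γ := Finset.mem_union_right _ hqΓ
        exact_mod_cast this
      have hq2S : q.2 ⊆ S := hqS (hq1.trans Set.inter_subset_left)
      exact hq2 (Set.subset_inter hq2S (hΓ.1 q hqΓ).2)
  · intro hS q hq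
    have hq' : q ∈ T.filter (fun p => ¬ φ p.1 = E) ∪ Γ := by exact_mod_cast hq
    rcases Finset.mem_union.mp hq' with hq1 | hq2
    · have hob : S ∈ ObeyFam (↑T : Set (Set X × Set X)) := by rw [h₁]; exact hS
      exact hob q (by exact_mod_cast (Finset.mem_filter.mp hq1).1)
    · intro h1
      have he := (hΓ.1 q hq2).1
      have hES : E ⊆ S := by
        have h2 := hmono _ _ h1
        rw [he] at h2
        have h3 : φ S = S := hS
        rw [h3] at h2
        exact h2
      exact ((hΓ.1 q hq2).2).trans hES

/-- The E-part of a basis is a cover. -/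
private lemma epart_cover (hφ : IsClosureOp φ) {T : Finset (Set X × Set X)}
    (h₁ : ObeyFam (↑T : Set (Set X × Set X)) = ClosedFam φ) :
    Cover φ E (T.filter (fun p => φ p.1 = E)) := by
  constructor
  · intro p hp
    obtain ⟨hpT, hpe⟩ := Finset.mem_filter.mp hp
    refine ⟨hpe, ?_⟩
    have := snd_subset hφ h₁ hpT
    rwa [hpe] at this
  · intro S hS
    obtain ⟨hSE, hstab, hSne, hSφ⟩ := hS
    have hSno : S ∉ ObeyFam (↑T : Set (Set X × Set X)) := by
      rw [h₁]
      intro h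
      exact hSne (h.symm.trans hSφ)
    simp only [ObeyFam, Set.mem_setOf_eq, not_forall] at hSno
    obtain ⟨p, hpT, hpfail⟩ := hSno
    have hpT' : p ∈ T := by exact_mod_cast hpT
    rw [Obeys, Classical.not_imp] at hpfail
    obtain ⟨hp1, hp2⟩ := hpfail
    have hpe : φ p.1 = E := by
      by_contra hpe
      have hφsub : φ p.1 ⊆ E := by
        have := hφ.2.1 _ _ hp1
        rwa [hSφ] at this
      have : φ p.1 ⊆ S := hstab p.1 hp1 hφsub hpe
      exact hp2 ((snd_subset hφ h₁ hpT').trans this)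
    exact ⟨p, Finset.mem_filter.mpr ⟨hpT', hpe⟩, hp1, hp2⟩

end Aux

section Surgery

variable {φ : Set X → Set X} {E : Set X}

private lemma sum_insert_le' {q : Set X × Set X} {s : Finset (Set X × Set X)}
    (f : Set X × Set X → ℕ) :
    ∑ p ∈ insert q s, f p ≤ f q + ∑ p ∈ s, f p := by
  by_cases h : q ∈ s
  · rw [Finset.insert_eq_self.mpr h]
    exact Nat.le_add_left _ _
  · rw [Finset.sum_insert h]

/-- Merging surgery: if two distinct implications of a minimum cover have comparable
saturations, the larger-saturation one has empty premise. -/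
private lemma merge_zero {Γ : Finset (Set X × Set X)} (hΓ : isMinCover φ E Γ)
    {γ δ : Set X × Set X} (hγ : γ ∈ Γ) (hδ : δ ∈ Γ) (hne : γ ≠ δ)
    (hsub : sat φ E δ.1 ⊆ sat φ E γ.1) : γ.1.ncard = 0 := by
  set q : Set X × Set X := (δ.1, δ.2 ∪ γ.2) with hq
  set Γ' := insert q ((Γ.erase γ).erase δ) with hΓ'
  have hcov' : Cover φ E Γ' := by
    constructor
    · intro p hp
      rcases Finset.mem_insert.mp hp with rfl | hp'
      · exact ⟨(hΓ.1.1 δ hδ).1, Set.union_subset (hΓ.1.1 δ hδ).2 (hΓ.1.1 γ hγ).2⟩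
      · exact hΓ.1.1 p (Finset.mem_of_mem_erase (Finset.mem_of_mem_erase hp'))
    · intro S hS
      obtain ⟨p, hpΓ, hp1, hp2⟩ := hΓ.1.2 S hS
      by_cases hpγ : p = γ
      · subst hpγ
        refine ⟨q, Finset.mem_insert_self _ _, ?_, ?_⟩
        · have h1 : sat φ E p.1 ⊆ S := sat_subset hp1 hS.1 hS.2.1
          exact (subset_sat (φ := φ) (E := E)).trans (hsub.trans h1)
        · intro hcon
          exact hp2 ((Set.subset_union_right).trans hcon)
      · by_cases hpδ : p = δ
        · subst hpδ
          refine ⟨q, Finset.mem_insert_self _ _, hp1, ?_⟩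
          intro hcon
          exact hp2 ((Set.subset_union_left).trans hcon)
        · exact ⟨p, Finset.mem_insert_of_mem
            (Finset.mem_erase.mpr ⟨hpδ, Finset.mem_erase.mpr ⟨hpγ, hpΓ⟩⟩), hp1, hp2⟩
  have hmin := hΓ.2 Γ' hcov'
  have e1 : ∑ p ∈ Γ', (p.1.ncard + p.2.ncard) ≤
      (q.1.ncard + q.2.ncard) + ∑ p ∈ (Γ.erase γ).erase δ, (p.1.ncard + p.2.ncard) :=
    sum_insert_le' _
  have hδ' : δ ∈ Γ.erase γ := Finset.mem_erase.mpr ⟨Ne.symm hne, hδ⟩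
  have e2 : ∑ p ∈ (Γ.erase γ).erase δ, (p.1.ncard + p.2.ncard) + (δ.1.ncard + δ.2.ncard)
      = ∑ p ∈ Γ.erase γ, (p.1.ncard + p.2.ncard) :=
    Finset.sum_erase_add (Γ.erase γ) _ hδ'
  have e3 : ∑ p ∈ Γ.erase γ, (p.1.ncard + p.2.ncard) + (γ.1.ncard + γ.2.ncard)
      = ∑ p ∈ Γ, (p.1.ncard + p.2.ncard) :=
    Finset.sum_erase_add Γ _ hγ
  have e4 : q.2.ncard ≤ δ.2.ncard + γ.2.ncard := Set.ncard_union_le _ _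
  have e5 : q.1.ncard = δ.1.ncard := rfl
  omega

/-- Replacement surgery: premises of a minimum cover have minimal size among
admissible sets with smaller saturation. -/
private lemma left_min {Γ : Finset (Set X × Set X)} (hΓ : isMinCover φ E Γ)
    {γ : Set X × Set X} (hγ : γ ∈ Γ) {A' : Set X} (hA' : φ A' = E)
    (hsub : sat φ E A' ⊆ sat φ E γ.1) : γ.1.ncard ≤ A'.ncard := by
  set q : Set X × Set X := (A', γ.2) with hq
  set Γ' := insert q (Γ.erase γ) with hΓ'
  have hcov' : Cover φ E Γ' := by
    constructor
    · intro p hp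
      rcases Finset.mem_insert.mp hp with rfl | hp'
      · exact ⟨hA', (hΓ.1.1 γ hγ).2⟩
      · exact hΓ.1.1 p (Finset.mem_of_mem_erase hp')
    · intro S hS
      obtain ⟨p, hpΓ, hp1, hp2⟩ := hΓ.1.2 S hS
      by_cases hpγ : p = γ
      · subst hpγ
        refine ⟨q, Finset.mem_insert_self _ _, ?_, hp2⟩
        have h1 : sat φ E p.1 ⊆ S := sat_subset hp1 hS.1 hS.2.1
        exact (subset_sat (φ := φ) (E := E)).trans (hsub.trans h1)
      · exact ⟨p, Finset.mem_insert_of_mem (Finset.mem_erase.mpr ⟨hpγ, hpΓ⟩), hp1, hp2⟩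
  have hmin := hΓ.2 Γ' hcov'
  have e1 : ∑ p ∈ Γ', (p.1.ncard + p.2.ncard) ≤
      (q.1.ncard + q.2.ncard) + ∑ p ∈ Γ.erase γ, (p.1.ncard + p.2.ncard) :=
    sum_insert_le' _
  have e3 : ∑ p ∈ Γ.erase γ, (p.1.ncard + p.2.ncard) + (γ.1.ncard + γ.2.ncard)
      = ∑ p ∈ Γ, (p.1.ncard + p.2.ncard) :=
    Finset.sum_erase_add Γ _ hγ
  have e5 : q.1.ncard = A'.ncard := rfl
  have e6 : q.2.ncard = γ.2.ncard := rfl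
  omega

variable [Finite X]

/-- In a minimum cover, no implication has saturation `E` (given `E ≠ ∅`). -/
private lemma class_ne_E (hφ : IsClosureOp φ) (hEne : E ≠ ∅)
    {Γ : Finset (Set X × Set X)} (hΓ : isMinCover φ E Γ)
    {γ : Set X × Set X} (hγ : γ ∈ Γ) : sat φ E γ.1 ≠ E := by
  intro hcE
  have hcov' : Cover φ E (Γ.erase γ) := by
    refine ⟨fun p hp => hΓ.1.1 p (Finset.mem_of_mem_erase hp), ?_⟩
    intro S hS
    obtain ⟨p, hpΓ, hp1, hp2⟩ := hΓ.1.2 S hS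
    have hpγ : p ≠ γ := by
      rintro rfl
      have h1 : sat φ E p.1 ⊆ S := sat_subset hp1 hS.1 hS.2.1
      rw [hcE] at h1
      exact hS.2.2.1 (Set.Subset.antisymm hS.1 h1)
    exact ⟨p, Finset.mem_erase.mpr ⟨hpγ, hpΓ⟩, hp1, hp2⟩
  have hmin := hΓ.2 _ hcov'
  have e3 : ∑ p ∈ Γ.erase γ, (p.1.ncard + p.2.ncard) + (γ.1.ncard + γ.2.ncard)
      = ∑ p ∈ Γ, (p.1.ncard + p.2.ncard) :=
    Finset.sum_erase_add Γ _ hγ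
  have hz1 : γ.1.ncard = 0 := by omega
  have h1 : γ.1 = ∅ := (Set.ncard_eq_zero (Set.toFinite _)).mp hz1
  have hphiem : φ γ.1 = E := (hΓ.1.1 γ hγ).1
  have hstab : Stab φ E (∅ : Set X) := by
    intro C hC hc1 hc2
    exfalso
    apply hc2
    have hCem : C = ∅ := Set.subset_empty_iff.mp hC
    rw [hCem, ← h1]
    exact hphiem
  have hsub : sat φ E γ.1 ⊆ ∅ := by
    rw [h1]
    exact sat_subset subset_rfl (Set.empty_subset E) hstab
  rw [hcE] at hsub
  exact hEne (Set.subset_empty_iff.mp hsub)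

private lemma class_mem_Q (hφ : IsClosureOp φ) (hEne : E ≠ ∅)
    {Γ : Finset (Set X × Set X)} (hΓ : isMinCover φ E Γ)
    {γ : Set X × Set X} (hγ : γ ∈ Γ) : sat φ E γ.1 ∈ Qset φ E := by
  have hpe : φ γ.1 = E := (hΓ.1.1 γ hγ).1
  have h1 : γ.1 ⊆ E := hpe ▸ hφ.1 γ.1
  exact ⟨sat_subset_E h1, stab_sat, class_ne_E hφ hEne hΓ hγ, phi_sat hφ hpe⟩

private lemma exists_min_below {Q : Set X} (hQ : Q ∈ Qset φ E) :
    ∃ P ∈ MinQ φ E, P ⊆ Q := by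
  have hfin : ({Q' | Q' ∈ Qset φ E ∧ Q' ⊆ Q}).Finite := Set.toFinite _
  have hne : ({Q' | Q' ∈ Qset φ E ∧ Q' ⊆ Q}).Nonempty := ⟨Q, hQ, subset_rfl⟩
  obtain ⟨P, hP, hPmin⟩ := hfin.exists_minimal hne
  refine ⟨P, ⟨hP.1, ?_⟩, hP.2⟩
  intro Q' hQ' hQ'P
  exact Set.Subset.antisymm hQ'P (hPmin ⟨hQ', hQ'P.trans hP.2⟩ hQ'P)

/-- In a minimum cover, all saturations are minimal members of `Qset`. -/
private lemma class_min (hφ : IsClosureOp φ) (hEne : E ≠ ∅)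
    {Γ : Finset (Set X × Set X)} (hΓ : isMinCover φ E Γ)
    {γ : Set X × Set X} (hγ : γ ∈ Γ) : sat φ E γ.1 ∈ MinQ φ E := by
  have hQ : sat φ E γ.1 ∈ Qset φ E := class_mem_Q hφ hEne hΓ hγ
  refine ⟨hQ, ?_⟩
  by_contra hcon
  push_neg at hcon
  obtain ⟨Q, hQQ, hQsub, hQne⟩ := hcon
  obtain ⟨P, hPmin, hPQ⟩ := exists_min_below hQQ
  obtain ⟨δ, hδΓ, hδ1, hδ2⟩ := hΓ.1.2 P hPmin.1
  have hsatδ : sat φ E δ.1 ⊆ P := sat_subset hδ1 hPmin.1.1 hPmin.1.2.1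
  have hδγ : δ ≠ γ := by
    rintro rfl
    have : sat φ E δ.1 ⊆ Q := hsatδ.trans hPQ
    exact hQne (Set.Subset.antisymm hQsub this)
  have hz : γ.1.ncard = 0 :=
    merge_zero hΓ hγ hδΓ (Ne.symm hδγ) (hsatδ.trans (hPQ.trans hQsub))
  have h1 : γ.1 = ∅ := (Set.ncard_eq_zero (Set.toFinite _)).mp hz
  have hphiem : φ γ.1 = E := (hΓ.1.1 γ hγ).1
  have hstab : Stab φ E (∅ : Set X) := by
    intro C hC hc1 hc2
    exfalso
    apply hc2
    have hCem : C = ∅ := Set.subset_empty_iff.mp hC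
    rw [hCem, ← h1]
    exact hphiem
  have hsub2 : sat φ E γ.1 ⊆ ∅ := by
    rw [h1]
    exact sat_subset subset_rfl (Set.empty_subset E) hstab
  have hsatem : sat φ E γ.1 = ∅ := Set.subset_empty_iff.mp hsub2
  have : Q = sat φ E γ.1 := by
    rw [hsatem] at hQsub ⊢
    exact Set.subset_empty_iff.mp hQsub
  exact hQne this

/-- In a minimum cover each premise size equals the canonical minimum `mval`. -/
private lemma left_eq_mval (hφ : IsClosureOp φ)
    {Γ : Finset (Set X × Set X)} (hΓ : isMinCover φ E Γ)
    {γ : Set X × Set X} (hγ : γ ∈ Γ) : γ.1.ncard = mval φ E (sat φ E γ.1) := by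
  have hmem : γ.1.ncard ∈ {n | ∃ A : Set X, φ A = E ∧ sat φ E A ⊆ sat φ E γ.1 ∧ A.ncard = n} :=
    ⟨γ.1, (hΓ.1.1 γ hγ).1, subset_rfl, rfl⟩
  have hle1 : mval φ E (sat φ E γ.1) ≤ γ.1.ncard := Nat.sInf_le hmem
  have hne : ({n | ∃ A : Set X, φ A = E ∧ sat φ E A ⊆ sat φ E γ.1 ∧ A.ncard = n}).Nonempty :=
    ⟨_, hmem⟩
  obtain ⟨A, hA1, hA2, hA3⟩ := Nat.sInf_mem hne
  have hle2 : γ.1.ncard ≤ mval φ E (sat φ E γ.1) := by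
    rw [mval, ← hA3]
    exact left_min hΓ hγ hA1 hA2
  omega

/-- Duplicated saturations force `mval = 0`. -/
private lemma dup_mval_zero {Γ : Finset (Set X × Set X)} (hΓ : isMinCover φ E Γ)
    {γ δ : Set X × Set X} (hγ : γ ∈ Γ) (hδ : δ ∈ Γ) (hne : γ ≠ δ)
    (heq : sat φ E γ.1 = sat φ E δ.1) : mval φ E (sat φ E γ.1) = 0 := by
  have hz : γ.1.ncard = 0 := merge_zero hΓ hγ hδ hne (heq.symm.subset)
  have hmem : γ.1.ncard ∈ {n | ∃ A : Set X, φ A = E ∧ sat φ E A ⊆ sat φ E γ.1 ∧ A.ncard = n} :=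
    ⟨γ.1, (hΓ.1.1 γ hγ).1, subset_rfl, rfl⟩
  have hle : mval φ E (sat φ E γ.1) ≤ γ.1.ncard := Nat.sInf_le hmem
  omega

/-- Every minimal member of `Qset` is the saturation of some implication of a cover. -/
private lemma class_surj (hφ : IsClosureOp φ) {Γ : Finset (Set X × Set X)} (hΓ : Cover φ E Γ)
    {P : Set X} (hP : P ∈ MinQ φ E) : ∃ γ ∈ Γ, sat φ E γ.1 = P := by
  obtain ⟨δ, hδΓ, hδ1, hδ2⟩ := hΓ.2 P hP.1
  refine ⟨δ, hδΓ, ?_⟩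
  have hsatδ : sat φ E δ.1 ⊆ P := sat_subset hδ1 hP.1.1 hP.1.2.1
  have hδE : φ δ.1 = E := (hΓ.1 δ hδΓ).1
  have h1 : δ.1 ⊆ E := hδE ▸ hφ.1 δ.1
  have hsQ : sat φ E δ.1 ∈ Qset φ E := by
    refine ⟨sat_subset_E h1, stab_sat, ?_, phi_sat hφ hδE⟩
    intro hcE
    rw [hcE] at hsatδ
    exact hP.1.2.2.1 (Set.Subset.antisymm hP.1.1 hsatδ)
  exact hP.2 _ hsQ hsatδ

end Surgery

section Count

variable {φ : Set X → Set X} {E : Set X} [Finite X]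

set_option maxHeartbeats 1000000 in
/-- The canonical value of the total premise size of a minimum cover. -/
private lemma count_left (hφ : IsClosureOp φ) (hEne : E ≠ ∅)
    {Γ : Finset (Set X × Set X)} (hΓ : isMinCover φ E Γ) :
    ∑ p ∈ Γ, p.1.ncard = ∑ P ∈ (Set.toFinite (MinQ φ E)).toFinset, mval φ E P := by
  have h1 : ∑ p ∈ Γ, p.1.ncard = ∑ p ∈ Γ, mval φ E (sat φ E p.1) :=
    Finset.sum_congr rfl fun p hp => left_eq_mval hφ hΓ hp
  rw [h1]
  rw [Finset.sum_comp (mval φ E) (fun p : Set X × Set X => sat φ E p.1)]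
  have himg : Γ.image (fun p => sat φ E p.1) = (Set.toFinite (MinQ φ E)).toFinset := by
    apply Finset.ext
    intro P
    simp only [Finset.mem_image, Set.Finite.mem_toFinset]
    constructor
    · rintro ⟨p, hp, rfl⟩
      exact class_min hφ hEne hΓ hp
    · intro hP
      obtain ⟨γ, hγ, hsat⟩ := class_surj hφ hΓ.1 hP
      exact ⟨γ, hγ, hsat⟩
  rw [himg]
  apply Finset.sum_congr rfl
  intro P hP
  set n := (Γ.filter fun p => sat φ E p.1 = P).card with hn
  have hpos : 0 < n := by
    rw [hn, Finset.card_pos]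
    obtain ⟨γ, hγ, hsat⟩ := class_surj hφ hΓ.1 ((Set.Finite.mem_toFinset _).mp hP)
    exact ⟨γ, Finset.mem_filter.mpr ⟨hγ, hsat⟩⟩
  rcases eq_or_lt_of_le (show 1 ≤ n from hpos) with h1' | h1'
  · rw [smul_eq_mul, ← h1']
    ring
  · have : ∃ a ∈ Γ.filter (fun p => sat φ E p.1 = P),
        ∃ b ∈ Γ.filter (fun p => sat φ E p.1 = P), a ≠ b := Finset.one_lt_card.mp h1'
    obtain ⟨a, ha, b, hb, hab⟩ := this
    obtain ⟨haΓ, haP⟩ := Finset.mem_filter.mp ha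
    obtain ⟨hbΓ, hbP⟩ := Finset.mem_filter.mp hb
    have hz : mval φ E P = 0 := by
      have := dup_mval_zero hΓ haΓ hbΓ hab (haP.trans hbP.symm)
      rwa [haP] at this
    rw [hz, smul_zero]

end Count

open scoped Classical in
theorem stmt15 [Finite X] (φ : Set X → Set X) (hφ : IsClosureOp φ)
    (E : Set X) (hE : ∃ Q, QuasiClosed φ Q ∧ φ Q = E)
    (T₁ T₂ : Finset (Set X × Set X))
    (h₁ : ObeyFam (↑T₁ : Set (Set X × Set X)) = ClosedFam φ)
    (h₂ : ObeyFam (↑T₂ : Set (Set X × Set X)) = ClosedFam φ)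
    (opt₁ : ∀ T : Finset (Set X × Set X),
      ObeyFam (↑T : Set (Set X × Set X)) = ClosedFam φ →
      ∑ p ∈ T₁, (p.1.ncard + p.2.ncard) ≤ ∑ p ∈ T, (p.1.ncard + p.2.ncard))
    (opt₂ : ∀ T : Finset (Set X × Set X),
      ObeyFam (↑T : Set (Set X × Set X)) = ClosedFam φ →
      ∑ p ∈ T₂, (p.1.ncard + p.2.ncard) ≤ ∑ p ∈ T, (p.1.ncard + p.2.ncard)) :
    ∑ p ∈ T₁.filter (fun p => φ p.1 = E), p.2.ncard
      = ∑ p ∈ T₂.filter (fun p => φ p.1 = E), p.2.ncard := by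
  have hEne : E ≠ ∅ := by
    obtain ⟨Q, ⟨hQnc, _⟩, hQE⟩ := hE
    intro h
    apply hQnc
    have hsub : Q ⊆ E := hQE ▸ hφ.1 Q
    have hQem : Q = ∅ := by rw [h] at hsub; exact Set.subset_empty_iff.mp hsub
    show φ Q = Q
    rw [hQE, hQem, h]
  -- E-parts are minimum covers
  have epart_min : ∀ (T : Finset (Set X × Set X)),
      ObeyFam (↑T : Set (Set X × Set X)) = ClosedFam φ →
      (∀ T' : Finset (Set X × Set X),
        ObeyFam (↑T' : Set (Set X × Set X)) = ClosedFam φ →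
        ∑ p ∈ T, (p.1.ncard + p.2.ncard) ≤ ∑ p ∈ T', (p.1.ncard + p.2.ncard)) →
      isMinCover φ E (T.filter fun p => φ p.1 = E) := by
    intro T hT hopt
    refine ⟨epart_cover hφ hT, ?_⟩
    intro Δ hΔ
    have hbasis := basis_of_cover hφ hT hΔ
    have hle := hopt _ hbasis
    have hdisj : Disjoint (T.filter fun p => ¬ φ p.1 = E) Δ := by
      rw [Finset.disjoint_left]
      intro p hp hpΔ
      exact (Finset.mem_filter.mp hp).2 (hΔ.1 p hpΔ).1
    rw [Finset.sum_union hdisj] at hle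
    have hsplit := Finset.sum_filter_add_sum_filter_not T (fun p => φ p.1 = E)
      (fun p => p.1.ncard + p.2.ncard)
    omega
  have m₁ : isMinCover φ E (T₁.filter fun p => φ p.1 = E) := epart_min T₁ h₁ opt₁
  have m₂ : isMinCover φ E (T₂.filter fun p => φ p.1 = E) := epart_min T₂ h₂ opt₂
  have hsize : ∑ p ∈ T₁.filter (fun p => φ p.1 = E), (p.1.ncard + p.2.ncard)
      = ∑ p ∈ T₂.filter (fun p => φ p.1 = E), (p.1.ncard + p.2.ncard) :=
    le_antisymm (m₁.2 _ m₂.1) (m₂.2 _ m₁.1)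
  have ha₁ := count_left hφ hEne m₁
  have ha₂ := count_left hφ hEne m₂
  have d₁ : ∑ p ∈ T₁.filter (fun p => φ p.1 = E), (p.1.ncard + p.2.ncard)
      = ∑ p ∈ T₁.filter (fun p => φ p.1 = E), p.1.ncard
        + ∑ p ∈ T₁.filter (fun p => φ p.1 = E), p.2.ncard := Finset.sum_add_distrib
  have d₂ : ∑ p ∈ T₂.filter (fun p => φ p.1 = E), (p.1.ncard + p.2.ncard)
      = ∑ p ∈ T₂.filter (fun p => φ p.1 = E), p.1.ncard
        + ∑ p ∈ T₂.filter (fun p => φ p.1 = E), p.2.ncard := Finset.sum_add_distrib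
  omega
end

section
/- Let Σ and Σ' be bases of a finite closure system (X, φ), E an essential set, and suppose the implications of Σ with φ(left side) = E contribute total right-side cardinality s, while those of Σ' contribute s' ≤ s, with corresponding left sides of equal cardinality. Then the basis Σ'' formed by replacing the E-group of Σ with the E-group of Σ' is a valid basis whose size is at most the size of Σ. -/
variable {X : Type*}

open scoped Classical in
theorem stmt16 [Finite X] (φ : Set X → Set X) (hφ : IsClosureOp φ)
    (E : Set X) (hE : ∃ Q, QuasiClosed φ Q ∧ φ Q = E)
    (T₁ T₂ : Finset (Set X × Set X))
    (h₁ : ObeyFam (↑T₁ : Set (Set X × Set X)) = ClosedFam φ)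
    (h₂ : ObeyFam (↑T₂ : Set (Set X × Set X)) = ClosedFam φ)
    (hleft : ∑ p ∈ T₂.filter (fun p => φ p.1 = E), p.1.ncard
           = ∑ p ∈ T₁.filter (fun p => φ p.1 = E), p.1.ncard)
    (hright : ∑ p ∈ T₂.filter (fun p => φ p.1 = E), p.2.ncard
            ≤ ∑ p ∈ T₁.filter (fun p => φ p.1 = E), p.2.ncard) :
    ObeyFam (↑(T₂.filter (fun p => φ p.1 = E) ∪ T₁.filter (fun p => φ p.1 ≠ E)) :
        Set (Set X × Set X)) = ClosedFam φ ∧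
    ∑ p ∈ T₂.filter (fun p => φ p.1 = E) ∪ T₁.filter (fun p => φ p.1 ≠ E),
        (p.1.ncard + p.2.ncard)
      ≤ ∑ p ∈ T₁, (p.1.ncard + p.2.ncard) := by

  obtain ⟨hext, hmono, hidem⟩ := hφ
  obtain ⟨Q, hQ, hQE⟩ := hE
  have hEclosed : φ E = E := by rw [← hQE, hidem]
  -- conclusions of basis implications are within the closure of the premise
  have hconc : ∀ (T : Finset (Set X × Set X)),
      ObeyFam (↑T : Set (Set X × Set X)) = ClosedFam φ →
      ∀ p ∈ T, p.2 ⊆ φ p.1 := by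
    intro T hT p hp
    have hcl : φ p.1 ∈ ClosedFam φ := hidem p.1
    rw [← hT] at hcl
    exact hcl p hp (hext p.1)
  constructor
  · apply Set.Subset.antisymm
    · -- obeying the mixed family implies closed
      intro S hS
      by_contra hSnc
      -- S fails some implication of T₁, necessarily with φ p.1 = E
      have hS1 : S ∉ ObeyFam (↑T₁ : Set (Set X × Set X)) := by rw [h₁]; exact hSnc
      simp only [ObeyFam, Set.mem_setOf_eq, not_forall] at hS1
      obtain ⟨p, hpT₁, hpfail⟩ := hS1
      simp only [Obeys, Classical.not_imp] at hpfail
      obtain ⟨hp1S, hp2S⟩ := hpfail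
      have hpE : φ p.1 = E := by
        by_contra hne
        have hmem : p ∈ T₂.filter (fun p => φ p.1 = E) ∪ T₁.filter (fun p => φ p.1 ≠ E) := by
          apply Finset.mem_union_right
          exact Finset.mem_filter.mpr ⟨hpT₁, hne⟩
        exact hp2S (hS p (by exact_mod_cast hmem) hp1S)
      set T : Set X := S ∩ E with hTdef
      have hp1E : p.1 ⊆ E := hpE ▸ hext p.1
      have hp1T : p.1 ⊆ T := Set.subset_inter hp1S hp1E
      have hφT : φ T = E := by
        apply Set.Subset.antisymm
        · calc φ T ⊆ φ E := hmono _ _ Set.inter_subset_right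
            _ = E := hEclosed
        · calc E = φ p.1 := hpE.symm
            _ ⊆ φ T := hmono _ _ hp1T
      have hp2E : p.2 ⊆ E := hpE ▸ hconc T₁ h₁ p hpT₁
      have hTneE : T ≠ E := by
        intro h
        have hES : E ⊆ S := by rw [← h]; exact Set.inter_subset_left
        exact hp2S (hp2E.trans hES)
      have hTnc : T ∉ ClosedFam φ := by
        intro h
        exact hTneE (by rw [← hφT]; exact (h : φ T = T).symm)
      -- T obeys the non-E implications of T₁
      have hTob1 : ∀ q ∈ T₁, φ q.1 ≠ E → Obeys T q := by
        intro q hq hqne hq1T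
        have hq1S : q.1 ⊆ S := hq1T.trans Set.inter_subset_left
        have hmem : q ∈ T₂.filter (fun p => φ p.1 = E) ∪ T₁.filter (fun p => φ p.1 ≠ E) :=
          Finset.mem_union_right _ (Finset.mem_filter.mpr ⟨hq, hqne⟩)
        have hq2S : q.2 ⊆ S := hS q (by exact_mod_cast hmem) hq1S
        have hq2E : q.2 ⊆ E := by
          have h1 : φ q.1 ⊆ E := by
            calc φ q.1 ⊆ φ T := hmono _ _ hq1T
              _ = E := hφT
          exact (hconc T₁ h₁ q hq).trans h1
        exact Set.subset_inter hq2S hq2E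
      -- T obeys the E implications of T₂
      have hTob2 : ∀ q ∈ T₂, φ q.1 = E → Obeys T q := by
        intro q hq hqE hq1T
        have hq1S : q.1 ⊆ S := hq1T.trans Set.inter_subset_left
        have hmem : q ∈ T₂.filter (fun p => φ p.1 = E) ∪ T₁.filter (fun p => φ p.1 ≠ E) :=
          Finset.mem_union_left _ (Finset.mem_filter.mpr ⟨hq, hqE⟩)
        have hq2S : q.2 ⊆ S := hS q (by exact_mod_cast hmem) hq1S
        have hq2E : q.2 ⊆ E := hqE ▸ hconc T₂ h₂ q hq
        exact Set.subset_inter hq2S hq2E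
      -- T is quasi-closed
      have hTqc : QuasiClosed φ T := by
        refine ⟨hTnc, fun C hC => ?_⟩
        by_cases hTC : T ⊆ C
        · exact Or.inl hTC
        · right
          have : T ∩ C ∈ ObeyFam (↑T₁ : Set (Set X × Set X)) := by
            intro q hq hq1
            have hq1T : q.1 ⊆ T := hq1.trans Set.inter_subset_left
            have hq1C : q.1 ⊆ C := hq1.trans Set.inter_subset_right
            by_cases hqE : φ q.1 = E
            · exfalso
              apply hTC
              have hEC : E ⊆ C := by
                have : φ q.1 ⊆ φ C := hmono _ _ hq1C
                rw [hqE, hC] at this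
                exact this
              exact Set.inter_subset_right.trans hEC
            · have hq2T : q.2 ⊆ T := hTob1 q hq hqE hq1T
              have hCobe : C ∈ ObeyFam (↑T₁ : Set (Set X × Set X)) := by rw [h₁]; exact hC
              have hq2C : q.2 ⊆ C := hCobe q hq hq1C
              exact Set.subset_inter hq2T hq2C
          rw [h₁] at this
          exact this
      -- T is not closed, so fails some implication of T₂, which must be a non-E one
      have hT2 : T ∉ ObeyFam (↑T₂ : Set (Set X × Set X)) := by rw [h₂]; exact hTnc
      simp only [ObeyFam, Set.mem_setOf_eq, not_forall] at hT2
      obtain ⟨q, hqT₂, hqfail⟩ := hT2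
      simp only [Obeys, Classical.not_imp] at hqfail
      obtain ⟨hq1T, hq2T⟩ := hqfail
      have hqne : φ q.1 ≠ E := fun h => hq2T (hTob2 q hqT₂ h hq1T)
      have hFclosed : φ q.1 ∈ ClosedFam φ := hidem q.1
      have hFE : φ q.1 ⊆ E := by
        calc φ q.1 ⊆ φ T := hmono _ _ hq1T
          _ = E := hφT
      rcases hTqc.2 (φ q.1) hFclosed with hTF | hTFcl
      · exact hqne (Set.Subset.antisymm hFE (by
          calc E = φ T := hφT.symm
            _ ⊆ φ (φ q.1) := hmono _ _ hTF
            _ = φ q.1 := hidem q.1))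
      · have hobe : T ∩ φ q.1 ∈ ObeyFam (↑T₂ : Set (Set X × Set X)) := by
          rw [h₂]; exact hTFcl
        have hq1in : q.1 ⊆ T ∩ φ q.1 := Set.subset_inter hq1T (hext q.1)
        exact hq2T ((hobe q hqT₂ hq1in).trans Set.inter_subset_left)
    · -- every closed set obeys the mixed family
      intro S hS p hp
      have hp' : p ∈ T₂.filter (fun p => φ p.1 = E) ∪ T₁.filter (fun p => φ p.1 ≠ E) := by
        exact_mod_cast hp
      rcases Finset.mem_union.mp hp' with h | h
      · have := Finset.mem_filter.mp h
        have hSo : S ∈ ObeyFam (↑T₂ : Set (Set X × Set X)) := by rw [h₂]; exact hS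
        exact hSo p this.1
      · have := Finset.mem_filter.mp h
        have hSo : S ∈ ObeyFam (↑T₁ : Set (Set X × Set X)) := by rw [h₁]; exact hS
        exact hSo p this.1
  · -- size bound
    have hdisj : Disjoint (T₂.filter (fun p => φ p.1 = E))
        (T₁.filter (fun p => φ p.1 ≠ E)) := by
      rw [Finset.disjoint_left]
      intro p hp hp'
      exact (Finset.mem_filter.mp hp').2 (Finset.mem_filter.mp hp).2
    rw [Finset.sum_union hdisj]
    have hsplit : ∑ p ∈ T₁.filter (fun p => φ p.1 = E), (p.1.ncard + p.2.ncard)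
        + ∑ p ∈ T₁.filter (fun p => φ p.1 ≠ E), (p.1.ncard + p.2.ncard)
        = ∑ p ∈ T₁, (p.1.ncard + p.2.ncard) := by
      exact Finset.sum_filter_add_sum_filter_not T₁ _ _
    rw [← hsplit]
    have h2 : ∑ p ∈ T₂.filter (fun p => φ p.1 = E), (p.1.ncard + p.2.ncard)
        ≤ ∑ p ∈ T₁.filter (fun p => φ p.1 = E), (p.1.ncard + p.2.ncard) := by
      rw [Finset.sum_add_distrib, Finset.sum_add_distrib, hleft]
      exact Nat.add_le_add_left hright _
    exact Nat.add_le_add_right h2 _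
end
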